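/- Let s ≥ 3, r ≥ 2, and assume r ≥ 3 or s ≥ 4. Let L be the free nilpotent Lie algebra of rank r and step s over ℝ with generators X_1, …, X_r; L is finite-dimensional, say of dimension N, and fix a basis (b_1, …, b_N) of L. For c ∈ ℝ^N let p_c ∈ L* be the functional with p_c(b_k) = c_k. Then the set of all c ∈ ℝ^N for which the linear map from C_{s−2}(L) to ℝ^r sending η to (p_c(⁅X_1,η⁆), …, p_c(⁅X_r,η⁆)) is surjective is an open and dense subset of ℝ^N; i.e., for almost all p ∈ L* this map is surjective. -/

import Mathlib

/-- The free nilpotent Lie algebra of rank `r` and step `s` over `K`: the quotient of the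
free Lie algebra `F` on `r` generators by the `s`-th term `C_s(F)` of its lower central
series (`C_0 = F`, `C_{k+1} = ⁅F, C_k⁆`). -/
abbrev FreeNilpotentLie (K : Type*) [Field K] (r s : ℕ) :=
  FreeLieAlgebra K (Fin r) ⧸
    LieModule.lowerCentralSeries K (FreeLieAlgebra K (Fin r)) (FreeLieAlgebra K (Fin r)) s

/-- The canonical generators `X_1, …, X_r` of the free nilpotent Lie algebra, i.e. the images
of the free generators. -/
noncomputable def FreeNilpotentLie.gen (K : Type*) [Field K] (r s : ℕ) (i : Fin r) :
    FreeNilpotentLie K r s :=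
  LieSubmodule.Quotient.mk' _ (FreeLieAlgebra.of K i)

/-- `G₁`: the `K`-span of the generators. -/
noncomputable def FreeNilpotentLie.G1 (K : Type*) [Field K] (r s : ℕ) :
    Submodule K (FreeNilpotentLie K r s) :=
  Submodule.span K (Set.range (FreeNilpotentLie.gen K r s))

namespace FNLAux

open Matrix
open Fin.NatCast

attribute [local instance 100] LieRing.ofAssociativeRing

variable (s : ℕ)

abbrev MatB := Matrix (Fin (s+1)) (Fin (s+1)) ℝ

noncomputable def Z (u : ℕ) : MatB s := Matrix.single 0 (u : Fin (s+1)) (1:ℝ)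

noncomputable def J : MatB s := ∑ k : Fin s, Matrix.single k.castSucc k.succ (1:ℝ)

lemma J_mul_Z (u : ℕ) : J s * Z s u = 0 := by
  rw [J, Z, Finset.sum_mul]
  refine Finset.sum_eq_zero fun k _ => ?_
  exact Matrix.single_mul_single_of_ne (h := Fin.succ_ne_zero k) ..

lemma Z_mul_J (u : ℕ) (hu : u < s) : Z s u * J s = Z s (u+1) := by
  rw [J, Z, Z, Finset.mul_sum]
  rw [Finset.sum_eq_single (⟨u, hu⟩ : Fin s)]
  · have h1 : ((u : Fin (s+1))) = (⟨u, hu⟩ : Fin s).castSucc := by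
      ext; simp [Fin.val_natCast, Nat.mod_eq_of_lt (Nat.lt_succ_of_lt hu)]
    rw [h1, Matrix.single_mul_single_same, one_mul]
    have h2 : (⟨u, hu⟩ : Fin s).succ = ((u+1 : ℕ) : Fin (s+1)) := by
      ext
      simp only [Fin.val_succ, Fin.val_add, Fin.val_natCast, Fin.val_one']
      exact (Nat.mod_eq_of_lt (show u+1 < s+1 by omega)).symm
    rw [h2]
  · intro k _ hk
    refine Matrix.single_mul_single_of_ne (h := ?_) ..
    intro hc
    apply hk
    ext
    have := congrArg Fin.val hc
    simpa [Fin.val_natCast, Nat.mod_eq_of_lt (Nat.lt_succ_of_lt hu)] using this.symm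
  · intro hmem; exact absurd (Finset.mem_univ _) hmem

lemma lie_J_Z (u : ℕ) (hu : u < s) : ⁅J s, Z s u⁆ = -Z s (u+1) := by
  rw [Ring.lie_def, J_mul_Z, Z_mul_J s u hu, zero_sub]

lemma Z_mul_Z (u v : ℕ) (hu : u ≤ s) (hune : u ≠ 0) : Z s u * Z s v = 0 := by
  rw [Z, Z]
  refine Matrix.single_mul_single_of_ne (h := ?_) ..
  intro hc
  have := congrArg Fin.val hc
  simp [Fin.val_natCast, Nat.mod_eq_of_lt (Nat.lt_succ_of_le hu)] at this
  exact hune this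

lemma lie_Z1_Z (u : ℕ) (hu : 2 ≤ u) (hus : u ≤ s) : ⁅Z s 1, Z s u⁆ = 0 := by
  have h1 : (1:ℕ) ≤ s := le_trans (by norm_num) (le_trans hu hus)
  rw [Ring.lie_def, Z_mul_Z s 1 u h1 one_ne_zero, Z_mul_Z s u 1 hus (by omega), sub_zero]

lemma lie_Z1_J (hs : 1 < s) : ⁅Z s 1, J s⁆ = Z s 2 := by
  rw [Ring.lie_def, Z_mul_J s 1 hs, J_mul_Z, sub_zero]

lemma iter_adJ (k : ℕ) (hk : k + 1 ≤ s) :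
    (fun z => ⁅J s, z⁆)^[k] (Z s 1) = ((-1:ℝ))^k • Z s (k+1) := by
  induction k with
  | zero => simp
  | succ n ih =>
    have hn : n + 1 ≤ s := by omega
    rw [Function.iterate_succ_apply', ih hn, lie_smul, lie_J_Z s (n+1) (by omega)]
    rw [pow_succ, smul_neg, ← neg_smul, mul_comm]
    norm_num [neg_smul]

lemma iter_lie_zero {A : Type*} [LieRing A] (w : A) (k : ℕ) :
    (fun z => ⁅w, z⁆)^[k] (0:A) = 0 :=
  Function.iterate_fixed (lie_zero w) k

lemma iter_adZ1_J (k : ℕ) (hk : 2 ≤ k) (hs : 2 ≤ s) :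
    (fun z => ⁅Z s 1, z⁆)^[k] (J s) = 0 := by
  obtain ⟨m, rfl⟩ : ∃ m, k = m + 2 := ⟨k - 2, by omega⟩
  rw [Function.iterate_add_apply]
  have h2 : (fun z => ⁅Z s 1, z⁆)^[2] (J s) = 0 := by
    show ⁅Z s 1, (fun z => ⁅Z s 1, z⁆)^[1] (J s)⁆ = 0
    show ⁅Z s 1, ⁅Z s 1, (J s)⁆⁆ = 0
    rw [lie_Z1_J s (by omega), lie_Z1_Z s 2 le_rfl hs]
  rw [h2, iter_lie_zero]


abbrev BigA (r s : ℕ) := Fin r → MatB s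

lemma lie_apply {r s : ℕ} (u v : BigA r s) (m : Fin r) : ⁅u, v⁆ m = ⁅u m, v m⁆ := by
  simp [Ring.lie_def]

lemma iter_apply {r s : ℕ} (u v : BigA r s) (k : ℕ) (m : Fin r) :
    ((fun z => ⁅u, z⁆)^[k] v) m = (fun z => ⁅u m, z⁆)^[k] (v m) := by
  induction k with
  | zero => rfl
  | succ n ih => rw [Function.iterate_succ_apply', Function.iterate_succ_apply', lie_apply, ih]

lemma iter_adzero {A : Type*} [LieRing A] (k : ℕ) (hk : 1 ≤ k) (v : A) :
    (fun z => ⁅(0:A), z⁆)^[k] v = 0 := by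
  obtain ⟨n, rfl⟩ : ∃ n, k = n + 1 := ⟨k - 1, by omega⟩
  rw [Function.iterate_succ_apply']
  exact zero_lie _

-- Fin facts
lemma fin_add_one_ne {r : ℕ} (hr : 2 ≤ r) [NeZero r] (m : Fin r) : m + 1 ≠ m := by
  intro hc
  have h0 : (1 : Fin r) = 0 := by
    have := congrArg (fun z => z - m) hc
    simpa [add_comm, add_sub_cancel_right, sub_self] using this
  have := congrArg Fin.val h0
  rw [Fin.val_one', Fin.val_zero, Nat.mod_eq_of_lt (by omega)] at this
  omega

lemma fin_add_two_ne {r : ℕ} (hr : 3 ≤ r) [NeZero r] (m : Fin r) : m + 1 + 1 ≠ m := by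
  intro hc
  have h0 : (1 + 1 : Fin r) = 0 := by
    have := congrArg (fun z => z - m) hc
    rw [add_assoc] at this
    simpa [add_comm, add_sub_cancel_right, sub_self] using this
  have := congrArg Fin.val h0
  rw [Fin.val_add, Fin.val_one', Fin.val_zero, Nat.mod_eq_of_lt (show 1 < r by omega)] at this
  rw [Nat.mod_eq_of_lt (by omega)] at this
  omega

lemma fin_two_add_two_eq (m : Fin 2) : m + 1 + 1 = m := by
  fin_cases m <;> decide

/-- The generators in the concrete model. -/
noncomputable def xg (r s : ℕ) [NeZero r] : Fin r → BigA r s := fun i m =>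
  if i = m then J s else if i = m + 1 then Z s 1 else 0

/-- The concrete images of the words `ad(X_j)^{s-2}(X_{j+1})`. -/
noncomputable def wA (r s : ℕ) [NeZero r] (j : Fin r) : BigA r s :=
  (fun z => ⁅xg r s j, z⁆)^[s-2] (xg r s (j+1))

lemma xg_same {r s : ℕ} [NeZero r] (m : Fin r) : xg r s m m = J s := by simp [xg]

lemma xg_succ {r s : ℕ} [NeZero r] (hr : 2 ≤ r) (m : Fin r) : xg r s (m+1) m = Z s 1 := by
  rw [xg]
  rw [if_neg (fin_add_one_ne hr m), if_pos rfl]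

lemma xg_other {r s : ℕ} [NeZero r] {i m : Fin r} (h1 : i ≠ m) (h2 : i ≠ m + 1) :
    xg r s i m = 0 := by
  rw [xg]
  rw [if_neg h1, if_neg h2]

lemma wA_diag {r s : ℕ} [NeZero r] (hr : 2 ≤ r) (hs : 3 ≤ s) (m : Fin r) :
    wA r s m m = ((-1:ℝ))^(s-2) • Z s (s-1) := by
  rw [wA, iter_apply, xg_same, xg_succ hr]
  have hes : s - 2 + 1 = s - 1 := by omega
  rw [iter_adJ s (s-2) (by omega), hes]

lemma wA_off {r s : ℕ} [NeZero r] (hr : 2 ≤ r) (hs : 3 ≤ s) (h : 3 ≤ r ∨ 4 ≤ s)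
    {j m : Fin r} (hjm : j ≠ m) : wA r s j m = 0 := by
  rw [wA, iter_apply]
  by_cases hj1 : j = m + 1
  · subst hj1
    rw [xg_succ hr]
    by_cases hr2 : r = 2
    · subst hr2
      rw [fin_two_add_two_eq, xg_same]
      exact iter_adZ1_J s (s-2) (by omega) (by omega)
    · rw [xg_other (fin_add_two_ne (by omega) m) (fun hc => fin_add_one_ne hr (m+1) hc)]
      exact iter_lie_zero _ _
  · rw [xg_other hjm hj1]
    exact iter_adzero (s-2) (by omega) _

/-- The dual functional on the concrete model. -/
noncomputable def qf (r s : ℕ) : BigA r s →ₗ[ℝ] ℝ where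
  toFun := fun M => (-1:ℝ)^(s-1) * ∑ m, M m 0 ((s : ℕ) : Fin (s+1))
  map_add' := fun a b => by
    simp only [Pi.add_apply, Matrix.add_apply, Finset.sum_add_distrib, mul_add]
  map_smul' := fun c a => by
    simp only [Pi.smul_apply, Matrix.smul_apply, smul_eq_mul, RingHom.id_apply, Finset.mul_sum]
    exact Finset.sum_congr rfl fun m _ => by ring

lemma lie_xg_wA_diag {r s : ℕ} [NeZero r] (hr : 2 ≤ r) (hs : 3 ≤ s) (j : Fin r) :
    ⁅xg r s j, wA r s j⁆ j = ((-1:ℝ))^(s-1) • Z s s := by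
  rw [lie_apply, wA_diag hr hs, xg_same, lie_smul, lie_J_Z s (s-1) (by omega)]
  have hz : s - 1 + 1 = s := by omega
  rw [hz, smul_neg, ← neg_smul]
  congr 1
  have hz2 : s - 1 = (s - 2) + 1 := by omega
  rw [hz2, pow_succ]
  ring

lemma lie_xg_wA_offdiag {r s : ℕ} [NeZero r] (hr : 2 ≤ r) (hs : 3 ≤ s)
    {i j : Fin r} (hij : i ≠ j) : ⁅xg r s i, wA r s j⁆ j = 0 := by
  rw [lie_apply, wA_diag hr hs]
  by_cases hi1 : i = j + 1
  · subst hi1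
    rw [xg_succ hr, lie_smul, lie_Z1_Z s (s-1) (by omega) (by omega), smul_zero]
  · rw [xg_other hij hi1, lie_smul, zero_lie, smul_zero]

lemma lie_xg_wA_other {r s : ℕ} [NeZero r] (hr : 2 ≤ r) (hs : 3 ≤ s) (h : 3 ≤ r ∨ 4 ≤ s)
    {i j m : Fin r} (hjm : j ≠ m) : ⁅xg r s i, wA r s j⁆ m = 0 := by
  rw [lie_apply, wA_off hr hs h hjm, lie_zero]

lemma qf_lie {r s : ℕ} [NeZero r] (hr : 2 ≤ r) (hs : 3 ≤ s) (h : 3 ≤ r ∨ 4 ≤ s)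
    (i j : Fin r) :
    qf r s ⁅xg r s i, wA r s j⁆ = if i = j then 1 else 0 := by
  have hsum : ∑ m, ⁅xg r s i, wA r s j⁆ m 0 ((s : ℕ) : Fin (s+1))
      = if i = j then ((-1:ℝ))^(s-1) else 0 := by
    rw [Finset.sum_eq_single j]
    · by_cases hij : i = j
      · subst hij
        rw [if_pos rfl, lie_xg_wA_diag hr hs, Matrix.smul_apply, smul_eq_mul, Z,
          Matrix.single_apply_same, mul_one]
      · rw [if_neg hij, lie_xg_wA_offdiag hr hs hij, Matrix.zero_apply]
    · intro m _ hmj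
      rw [lie_xg_wA_other hr hs h (Ne.symm hmj), Matrix.zero_apply]
    · intro hmem; exact absurd (Finset.mem_univ _) hmem
  show (-1:ℝ)^(s-1) * ∑ m, ⁅xg r s i, wA r s j⁆ m 0 ((s : ℕ) : Fin (s+1)) = _
  rw [hsum]
  by_cases hij : i = j
  · rw [if_pos hij, if_pos hij, ← mul_pow]
    norm_num
  · rw [if_neg hij, if_neg hij, mul_zero]

/-- The support filtration on the concrete model. -/
def Vf (r s k : ℕ) : Submodule ℝ (BigA r s) where
  carrier := {M | ∀ (m : Fin r) (a b : Fin (s+1)), (b:ℕ) < (a:ℕ) + k + 1 → M m a b = 0}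
  add_mem' := fun ha hb m a b hlt => by
    rw [Pi.add_apply, Matrix.add_apply, ha m a b hlt, hb m a b hlt, add_zero]
  zero_mem' := fun m a b _ => rfl
  smul_mem' := fun c M hM m a b hlt => by
    rw [Pi.smul_apply, Matrix.smul_apply, hM m a b hlt, smul_zero]

lemma Vf_mul {r s j k : ℕ} {u v : BigA r s} (hu : u ∈ Vf r s j) (hv : v ∈ Vf r s k) :
    u * v ∈ Vf r s (j + k + 1) := by
  intro m a b hlt
  rw [Pi.mul_apply, Matrix.mul_apply]
  refine Finset.sum_eq_zero fun c _ => ?_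
  by_cases hc : (c:ℕ) < (a:ℕ) + j + 1
  · rw [hu m a c hc, zero_mul]
  · rw [hv m c b (by omega), mul_zero]

lemma Vf_lie {r s j k : ℕ} {u v : BigA r s} (hu : u ∈ Vf r s j) (hv : v ∈ Vf r s k) :
    ⁅u, v⁆ ∈ Vf r s (j + k + 1) := by
  rw [Ring.lie_def]
  refine sub_mem (Vf_mul hu hv) ?_
  have := Vf_mul hv hu
  rwa [show k + j + 1 = j + k + 1 by omega] at this

lemma xg_mem_Vf0 {r s : ℕ} [NeZero r] (hs : 1 ≤ s) (i : Fin r) : xg r s i ∈ Vf r s 0 := by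
  intro m a b hlt
  rw [xg]
  split_ifs with h1 h2
  · simp only [J, Matrix.sum_apply]
    refine Finset.sum_eq_zero fun kk _ => ?_
    apply Matrix.single_apply_of_ne
    rintro ⟨rfl, rfl⟩
    rw [Fin.coe_castSucc, Fin.val_succ] at hlt
    omega
  · rw [Z]
    apply Matrix.single_apply_of_ne
    rintro ⟨rfl, rfl⟩
    rw [Fin.val_zero, Fin.val_natCast, Nat.mod_eq_of_lt (by omega)] at hlt
    omega
  · rfl

/-- The strictly upper triangular subalgebra. -/
noncomputable def S0 (r s : ℕ) : LieSubalgebra ℝ (BigA r s) :=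
  { Vf r s 0 with
    lie_mem' := fun {x y} hx hy => by
      have h1 : ⁅x, y⁆ ∈ Vf r s 1 := Vf_lie hx hy
      intro m a b hlt
      exact h1 m a b (by omega) }

lemma phi_mem_Vf0 {r s : ℕ} [NeZero r] (hs : 1 ≤ s) (z : FreeLieAlgebra ℝ (Fin r)) :
    FreeLieAlgebra.lift ℝ (xg r s) z ∈ Vf r s 0 := by
  set φ' : FreeLieAlgebra ℝ (Fin r) →ₗ⁅ℝ⁆ S0 r s :=
    FreeLieAlgebra.lift ℝ (fun i => (⟨xg r s i, xg_mem_Vf0 hs i⟩ : S0 r s)) with hφ'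
  have hcomp : (S0 r s).incl.comp φ' = FreeLieAlgebra.lift ℝ (xg r s) := by
    apply (FreeLieAlgebra.lift ℝ).symm.injective
    rw [FreeLieAlgebra.lift_symm_apply, FreeLieAlgebra.lift_symm_apply]
    funext i
    simp only [Function.comp_apply, LieHom.comp_apply, hφ', FreeLieAlgebra.lift_of_apply]
    rfl
  have := DFunLike.congr_fun hcomp z
  rw [← this]
  exact (φ' z).2

lemma phi_mem_Vf {r s : ℕ} [NeZero r] (hs : 1 ≤ s) (k : ℕ) (z : FreeLieAlgebra ℝ (Fin r))
    (hz : z ∈ LieModule.lowerCentralSeries ℝ (FreeLieAlgebra ℝ (Fin r))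
      (FreeLieAlgebra ℝ (Fin r)) k) :
    FreeLieAlgebra.lift ℝ (xg r s) z ∈ Vf r s k := by
  induction k generalizing z with
  | zero => exact phi_mem_Vf0 hs z
  | succ k ih =>
    rw [LieModule.lowerCentralSeries_succ] at hz
    have hz' : z ∈ Submodule.span ℝ {m | ∃ x ∈ (⊤ : LieIdeal ℝ (FreeLieAlgebra ℝ (Fin r))),
        ∃ n ∈ LieModule.lowerCentralSeries ℝ (FreeLieAlgebra ℝ (Fin r))
          (FreeLieAlgebra ℝ (Fin r)) k, ⁅x, n⁆ = m} := by
      rw [← LieSubmodule.lieIdeal_oper_eq_linear_span']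
      exact hz
    refine Submodule.span_induction ?_ ?_ ?_ ?_ hz'
      (p := fun w _ => FreeLieAlgebra.lift ℝ (xg r s) w ∈ Vf r s (k+1))
    · rintro w ⟨x, -, n, hn, rfl⟩
      rw [LieHom.map_lie]
      have := Vf_lie (phi_mem_Vf0 hs x) (ih n hn)
      rwa [show 0 + k + 1 = k + 1 by omega] at this
    · show (FreeLieAlgebra.lift ℝ) (xg r s) (0 : FreeLieAlgebra ℝ (Fin r)) ∈ Vf r s (k+1)
      rw [map_zero]; exact Submodule.zero_mem _
    · intro a b _ _ ha hb
      show (FreeLieAlgebra.lift ℝ) (xg r s) (a + b) ∈ Vf r s (k+1)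
      rw [map_add]
      exact Submodule.add_mem _ ha hb
    · intro c a _ ha
      show (FreeLieAlgebra.lift ℝ) (xg r s) (c • a) ∈ Vf r s (k+1)
      rw [map_smul]
      exact Submodule.smul_mem _ c ha

lemma phi_lcs_zero {r s : ℕ} [NeZero r] (hs : 1 ≤ s) (z : FreeLieAlgebra ℝ (Fin r))
    (hz : z ∈ LieModule.lowerCentralSeries ℝ (FreeLieAlgebra ℝ (Fin r))
      (FreeLieAlgebra ℝ (Fin r)) s) :
    FreeLieAlgebra.lift ℝ (xg r s) z = 0 := by
  have hmem := phi_mem_Vf hs s z hz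
  funext m
  ext a b
  exact hmem m a b (by omega)

section Quot

variable (r s : ℕ) [NeZero r]

noncomputable def p0 (hs : 1 ≤ s) : FreeNilpotentLie ℝ r s →ₗ[ℝ] ℝ :=
  Submodule.liftQ _ ((qf r s) ∘ₗ (FreeLieAlgebra.lift ℝ (xg r s)).toLinearMap)
    (by
      intro z hz
      rw [LinearMap.mem_ker, LinearMap.comp_apply, LieHom.coe_toLinearMap,
        phi_lcs_zero hs z hz, map_zero])

lemma p0_mk (hs : 1 ≤ s) (z : FreeLieAlgebra ℝ (Fin r)) :
    p0 r s hs (LieSubmodule.Quotient.mk'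
      (LieModule.lowerCentralSeries ℝ (FreeLieAlgebra ℝ (Fin r)) (FreeLieAlgebra ℝ (Fin r)) s) z)
      = qf r s (FreeLieAlgebra.lift ℝ (xg r s) z) := rfl

noncomputable def etaL (j : Fin r) : FreeNilpotentLie ℝ r s :=
  (fun z => ⁅FreeNilpotentLie.gen ℝ r s j, z⁆)^[s-2] (FreeNilpotentLie.gen ℝ r s (j+1))

lemma iter_mem_lcs {L : Type*} [LieRing L] [LieAlgebra ℝ L] (u v : L) (k : ℕ) :
    (fun z => ⁅u, z⁆)^[k] v ∈ LieModule.lowerCentralSeries ℝ L L k := by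
  induction k with
  | zero => rw [LieModule.lowerCentralSeries_zero]; exact LieSubmodule.mem_top _
  | succ n ih =>
    rw [Function.iterate_succ_apply', LieModule.lowerCentralSeries_succ]
    exact LieSubmodule.lie_mem_lie (LieSubmodule.mem_top u) ih

lemma etaL_mem (j : Fin r) :
    etaL r s j ∈ LieModule.lowerCentralSeries ℝ (FreeNilpotentLie ℝ r s)
      (FreeNilpotentLie ℝ r s) (s-2) :=
  iter_mem_lcs _ _ _

lemma mk'_iter (u v : FreeLieAlgebra ℝ (Fin r)) (k : ℕ) :
    LieSubmodule.Quotient.mk'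
        (LieModule.lowerCentralSeries ℝ (FreeLieAlgebra ℝ (Fin r)) (FreeLieAlgebra ℝ (Fin r)) s)
        ((fun z => ⁅u, z⁆)^[k] v)
      = (fun z => ⁅LieSubmodule.Quotient.mk'
          (LieModule.lowerCentralSeries ℝ (FreeLieAlgebra ℝ (Fin r))
            (FreeLieAlgebra ℝ (Fin r)) s) u, z⁆)^[k]
        (LieSubmodule.Quotient.mk'
          (LieModule.lowerCentralSeries ℝ (FreeLieAlgebra ℝ (Fin r))
            (FreeLieAlgebra ℝ (Fin r)) s) v) := by
  induction k with
  | zero => rfl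
  | succ n ih =>
    rw [Function.iterate_succ_apply', Function.iterate_succ_apply', ← ih]
    exact LieSubmodule.Quotient.mk_bracket
      (I := LieModule.lowerCentralSeries ℝ (FreeLieAlgebra ℝ (Fin r))
        (FreeLieAlgebra ℝ (Fin r)) s) _ _

lemma phi_iter (u v : FreeLieAlgebra ℝ (Fin r)) (k : ℕ) :
    FreeLieAlgebra.lift ℝ (xg r s) ((fun z => ⁅u, z⁆)^[k] v)
      = (fun z => ⁅FreeLieAlgebra.lift ℝ (xg r s) u, z⁆)^[k]
          (FreeLieAlgebra.lift ℝ (xg r s) v) := by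
  induction k with
  | zero => rfl
  | succ n ih =>
    rw [Function.iterate_succ_apply', Function.iterate_succ_apply', ← ih]
    exact LieHom.map_lie _ _ _

lemma p0_gen_etaL (hr : 2 ≤ r) (hs : 3 ≤ s) (h : 3 ≤ r ∨ 4 ≤ s) (i j : Fin r) :
    p0 r s (by omega) ⁅FreeNilpotentLie.gen ℝ r s i, etaL r s j⁆ = if i = j then 1 else 0 := by
  have hη : etaL r s j = LieSubmodule.Quotient.mk'
      (LieModule.lowerCentralSeries ℝ (FreeLieAlgebra ℝ (Fin r)) (FreeLieAlgebra ℝ (Fin r)) s)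
      ((fun z => ⁅FreeLieAlgebra.of ℝ j, z⁆)^[s-2] (FreeLieAlgebra.of ℝ (j+1))) :=
    (mk'_iter r s _ _ _).symm
  rw [hη]
  have hbr : ⁅FreeNilpotentLie.gen ℝ r s i, LieSubmodule.Quotient.mk'
      (LieModule.lowerCentralSeries ℝ (FreeLieAlgebra ℝ (Fin r)) (FreeLieAlgebra ℝ (Fin r)) s)
      ((fun z => ⁅FreeLieAlgebra.of ℝ j, z⁆)^[s-2] (FreeLieAlgebra.of ℝ (j+1)))⁆
      = LieSubmodule.Quotient.mk'
      (LieModule.lowerCentralSeries ℝ (FreeLieAlgebra ℝ (Fin r)) (FreeLieAlgebra ℝ (Fin r)) s)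
      ⁅FreeLieAlgebra.of ℝ i,
        (fun z => ⁅FreeLieAlgebra.of ℝ j, z⁆)^[s-2] (FreeLieAlgebra.of ℝ (j+1))⁆ :=
    (LieSubmodule.Quotient.mk_bracket
      (I := LieModule.lowerCentralSeries ℝ (FreeLieAlgebra ℝ (Fin r))
        (FreeLieAlgebra ℝ (Fin r)) s) _ _).symm
  rw [hbr, p0_mk]
  rw [LieHom.map_lie, phi_iter, FreeLieAlgebra.lift_of_apply, FreeLieAlgebra.lift_of_apply,
    FreeLieAlgebra.lift_of_apply]
  exact qf_lie hr hs h i j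

end Quot

section Main

variable {r s N : ℕ} [NeZero r] (b : Module.Basis (Fin N) ℝ (FreeNilpotentLie ℝ r s))

/-- Evaluation of the constructed functional, as a linear map in the coefficients. -/
noncomputable def evc (v : FreeNilpotentLie ℝ r s) : (Fin N → ℝ) →ₗ[ℝ] ℝ where
  toFun c := b.constr ℝ c v
  map_add' c c' := by
    have h := (b.constr (M' := ℝ) ℝ).map_add c c'
    simp only [h, LinearMap.add_apply]
  map_smul' t c := by
    have h := (b.constr (M' := ℝ) ℝ).map_smul t c
    simp only [h, LinearMap.smul_apply, smul_eq_mul, RingHom.id_apply]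

noncomputable def Mmat (c : Fin N → ℝ) (η : Fin r → FreeNilpotentLie ℝ r s) :
    Matrix (Fin r) (Fin r) ℝ :=
  Matrix.of fun i j => b.constr ℝ c ⁅FreeNilpotentLie.gen ℝ r s i, η j⁆

lemma mem_iff (c : Fin N → ℝ) :
    (∀ d : Fin r → ℝ,
        ∃ η ∈ LieModule.lowerCentralSeries ℝ (FreeNilpotentLie ℝ r s)
          (FreeNilpotentLie ℝ r s) (s - 2),
          ∀ i : Fin r, (b.constr ℝ c) ⁅FreeNilpotentLie.gen ℝ r s i, η⁆ = d i)
      ↔ ∃ η : Fin r → FreeNilpotentLie ℝ r s,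
          (∀ j, η j ∈ LieModule.lowerCentralSeries ℝ (FreeNilpotentLie ℝ r s)
            (FreeNilpotentLie ℝ r s) (s - 2)) ∧ (Mmat b c η).det ≠ 0 := by
  constructor
  · intro hc
    choose η hmem hval using fun m => hc (Pi.single m 1)
    refine ⟨η, hmem, ?_⟩
    have hM : Mmat b c η = 1 := by
      ext i j
      rw [Mmat, Matrix.of_apply, hval j i, Matrix.one_apply, Pi.single_apply]
    rw [hM, Matrix.det_one]
    exact one_ne_zero
  · rintro ⟨η, hmem, hdet⟩ d
    set M := Mmat b c η with hM
    set a := M⁻¹ *ᵥ d with ha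
    refine ⟨∑ j, a j • η j, ?_, ?_⟩
    · exact Submodule.sum_mem _ fun j _ =>
        Submodule.smul_mem _ _ (hmem j)
    · intro i
      have hlie : ⁅FreeNilpotentLie.gen ℝ r s i, ∑ j, a j • η j⁆
          = ∑ j, a j • ⁅FreeNilpotentLie.gen ℝ r s i, η j⁆ := by
        rw [← LieAlgebra.ad_apply (R := ℝ), map_sum]
        exact Finset.sum_congr rfl fun j _ => by
          rw [LinearMap.map_smul, LieAlgebra.ad_apply]
      rw [hlie, map_sum]
      have : ∀ j, b.constr ℝ c (a j • ⁅FreeNilpotentLie.gen ℝ r s i, η j⁆)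
          = M i j * a j := fun j => by
        rw [LinearMap.map_smul, smul_eq_mul, mul_comm]; rfl
      rw [Finset.sum_congr rfl fun j _ => this j]
      have hMv : ∑ j, M i j * a j = (M *ᵥ a) i := rfl
      rw [hMv, ha, Matrix.mulVec_mulVec, Matrix.mul_nonsing_inv _ (isUnit_iff_ne_zero.mpr hdet),
        Matrix.one_mulVec]

lemma cont_det (η : Fin r → FreeNilpotentLie ℝ r s) :
    Continuous fun c : Fin N → ℝ => (Mmat b c η).det := by
  refine Continuous.matrix_det (continuous_matrix fun i j => ?_)
  exact (evc b ⁅FreeNilpotentLie.gen ℝ r s i, η j⁆).continuous_of_finiteDimensional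

lemma isOpen_S :
    IsOpen {c : Fin N → ℝ |
        ∀ d : Fin r → ℝ,
          ∃ η ∈ LieModule.lowerCentralSeries ℝ (FreeNilpotentLie ℝ r s)
            (FreeNilpotentLie ℝ r s) (s - 2),
            ∀ i : Fin r, (b.constr ℝ c) ⁅FreeNilpotentLie.gen ℝ r s i, η⁆ = d i} := by
  have hset : {c : Fin N → ℝ |
        ∀ d : Fin r → ℝ,
          ∃ η ∈ LieModule.lowerCentralSeries ℝ (FreeNilpotentLie ℝ r s)
            (FreeNilpotentLie ℝ r s) (s - 2),
            ∀ i : Fin r, (b.constr ℝ c) ⁅FreeNilpotentLie.gen ℝ r s i, η⁆ = d i}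
      = ⋃ (η : Fin r → FreeNilpotentLie ℝ r s)
          (_ : ∀ j, η j ∈ LieModule.lowerCentralSeries ℝ (FreeNilpotentLie ℝ r s)
            (FreeNilpotentLie ℝ r s) (s - 2)),
          {c : Fin N → ℝ | (Mmat b c η).det ≠ 0} := by
    ext c
    simp only [Set.mem_setOf_eq, Set.mem_iUnion]
    rw [mem_iff b c]
    constructor
    · rintro ⟨η, hmem, hdet⟩; exact ⟨η, hmem, hdet⟩
    · rintro ⟨η, hmem, hdet⟩; exact ⟨η, hmem, hdet⟩
  rw [hset]
  refine isOpen_iUnion fun η => isOpen_iUnion fun _ => ?_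
  exact (isOpen_ne.preimage (cont_det b η) : _)

end Main

section Density

variable {r s N : ℕ} [NeZero r] (b : Module.Basis (Fin N) ℝ (FreeNilpotentLie ℝ r s))

lemma Mmat_linear (x u : Fin N → ℝ) (t : ℝ) (η : Fin r → FreeNilpotentLie ℝ r s) (i j : Fin r) :
    Mmat b (x + t • u) η i j = Mmat b x η i j + t * Mmat b u η i j := by
  show evc b ⁅FreeNilpotentLie.gen ℝ r s i, η j⁆ (x + t • u) = _
  rw [map_add, LinearMap.map_smul, smul_eq_mul]
  rfl

lemma dense_S (hr : 2 ≤ r) (hs : 3 ≤ s) (h : 3 ≤ r ∨ 4 ≤ s) :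
    Dense {c : Fin N → ℝ |
        ∀ d : Fin r → ℝ,
          ∃ η ∈ LieModule.lowerCentralSeries ℝ (FreeNilpotentLie ℝ r s)
            (FreeNilpotentLie ℝ r s) (s - 2),
            ∀ i : Fin r, (b.constr ℝ c) ⁅FreeNilpotentLie.gen ℝ r s i, η⁆ = d i} := by
  have hs1 : 1 ≤ s := by omega
  set η0 : Fin r → FreeNilpotentLie ℝ r s := etaL r s with hη0
  set c0 : Fin N → ℝ := fun k => p0 r s hs1 (b k) with hc0
  have hconstr : b.constr ℝ c0 = p0 r s hs1 := b.constr_eq ℝ fun i => rfl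
  have hM0 : Mmat b c0 η0 = 1 := by
    ext i j
    rw [Mmat, Matrix.of_apply, hconstr, Matrix.one_apply, hη0]
    exact p0_gen_etaL r s hr hs h i j
  have hdense : Dense {c : Fin N → ℝ | (Mmat b c η0).det ≠ 0} := by
    rw [Metric.dense_iff]
    intro x ε hε
    set u : Fin N → ℝ := c0 - x with hu
    set P : Polynomial ℝ := (Matrix.of fun i j => Polynomial.C (Mmat b x η0 i j)
      + Polynomial.X * Polynomial.C (Mmat b u η0 i j)).det with hP
    have heval : ∀ t : ℝ, P.eval t = (Mmat b (x + t • u) η0).det := by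
      intro t
      have h1 := RingHom.map_det (Polynomial.evalRingHom t)
        (Matrix.of fun i j => Polynomial.C (Mmat b x η0 i j)
          + Polynomial.X * Polynomial.C (Mmat b u η0 i j))
      rw [RingHom.mapMatrix_apply, Polynomial.coe_evalRingHom] at h1
      rw [hP, h1]
      congr 1
      ext i j
      rw [Matrix.map_apply, Matrix.of_apply, Mmat_linear b x u t η0 i j]
      rw [Polynomial.eval_add, Polynomial.eval_mul, Polynomial.eval_C, Polynomial.eval_X,
        Polynomial.eval_C]
    have hP1 : P.eval 1 = 1 := by
      have hxu : x + (1:ℝ) • u = c0 := by rw [one_smul, hu, add_sub_cancel]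
      rw [heval 1, hxu, hM0, Matrix.det_one]
    have hPne : P ≠ 0 := fun hcon => by rw [hcon] at hP1; simp at hP1
    have hfin := Polynomial.finite_setOf_isRoot hPne
    have hpos : (0:ℝ) < ‖u‖ + 1 := by positivity
    have hδ : 0 < ε / (‖u‖ + 1) := div_pos hε hpos
    have hIoo : (Set.Ioo (0:ℝ) (ε / (‖u‖ + 1))).Infinite := Set.Ioo_infinite hδ
    obtain ⟨t, ht⟩ := (hIoo.diff hfin).nonempty
    obtain ⟨⟨ht0, htδ⟩, htroot⟩ := ht
    refine ⟨x + t • u, ?_, ?_⟩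
    · rw [Metric.mem_ball, dist_eq_norm, add_sub_cancel_left, norm_smul, Real.norm_eq_abs,
        abs_of_pos ht0]
      calc t * ‖u‖ ≤ t * (‖u‖ + 1) := by nlinarith [norm_nonneg u]
        _ < (ε / (‖u‖ + 1)) * (‖u‖ + 1) := mul_lt_mul_of_pos_right htδ hpos
        _ = ε := div_mul_cancel₀ _ (ne_of_gt hpos)
    · show (Mmat b (x + t • u) η0).det ≠ 0
      rw [← heval t]
      exact fun hcon => htroot hcon
  refine hdense.mono ?_
  intro c hc
  rw [Set.mem_setOf_eq, mem_iff b c]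
  exact ⟨η0, fun j => etaL_mem r s j, hc⟩

end Density

end FNLAux

/-- Let `L` be the free nilpotent Lie algebra over `ℝ` of rank `r ≥ 2` and
step `s ≥ 3`, with `r ≥ 3` or `s ≥ 4`, and fix a basis `b` of `L` indexed by `Fin N`.
For `c ∈ ℝ^N` let `p_c ∈ L*` be the functional with `p_c (b k) = c k`.  Then the set of
`c ∈ ℝ^N` for which `η ↦ (p_c ⁅X_1, η⁆, …, p_c ⁅X_r, η⁆)`, defined on `C_{s-2}(L)`,
is surjective onto `ℝ^r` is open and dense. -/
theorem B1_surjective_openDense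
    (r s : ℕ) (hr : 2 ≤ r) (hs : 3 ≤ s) (h : 3 ≤ r ∨ 4 ≤ s)
    (N : ℕ) (b : Module.Basis (Fin N) ℝ (FreeNilpotentLie ℝ r s)) :
    IsOpen {c : Fin N → ℝ |
        ∀ d : Fin r → ℝ,
          ∃ η ∈ LieModule.lowerCentralSeries ℝ (FreeNilpotentLie ℝ r s)
            (FreeNilpotentLie ℝ r s) (s - 2),
            ∀ i : Fin r, (b.constr ℝ c) ⁅FreeNilpotentLie.gen ℝ r s i, η⁆ = d i} ∧
    Dense {c : Fin N → ℝ |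
        ∀ d : Fin r → ℝ,
          ∃ η ∈ LieModule.lowerCentralSeries ℝ (FreeNilpotentLie ℝ r s)
            (FreeNilpotentLie ℝ r s) (s - 2),
            ∀ i : Fin r, (b.constr ℝ c) ⁅FreeNilpotentLie.gen ℝ r s i, η⁆ = d i} := by
  haveI : NeZero r := ⟨by omega⟩
  exact ⟨FNLAux.isOpen_S b, FNLAux.dense_S b hr hs h⟩
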